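/- arXiv:1611.08175 — 4 statements merged into one kernel-verified Lean document; each statement's English description precedes it below -/
import Mathlib

section
/- Let Q be a positive joint distribution on 𝒳 × 𝒴. Then the projected relative entropy is convex in its first argument: for all joint distributions P̄ and P̃ on 𝒳 × 𝒴 and all p ∈ [0,1], E(p·P̄ + (1−p)·P̃ ‖ Q) ≤ p·E(P̄‖Q) + (1−p)·E(P̃‖Q). -/
open scoped Classical BigOperators

noncomputable section

variable {X Y : Type*} [Fintype X] [Fintype Y]

/-- `P` is a joint distribution on `X × Y`. -/
def IsDist (P : X × Y → ℝ) : Prop :=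
  (∀ z, 0 ≤ P z) ∧ ∑ z : X × Y, P z = 1

/-- `P` is a positive joint distribution on `X × Y`. -/
def IsPos (P : X × Y → ℝ) : Prop :=
  (∀ z, 0 < P z) ∧ ∑ z : X × Y, P z = 1

/-- The first marginal of a joint distribution. -/
def margX (P : X × Y → ℝ) (x : X) : ℝ := ∑ y : Y, P (x, y)

/-- The second marginal of a joint distribution. -/
def margY (P : X × Y → ℝ) (y : Y) : ℝ := ∑ x : X, P (x, y)

/-- Relative entropy `D(P‖Q)` (natural log; `Real.log 0 = 0` realizes `0·log 0 = 0`). -/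
def relEnt (P Q : X × Y → ℝ) : ℝ := ∑ z : X × Y, P z * Real.log (P z / Q z)

/-- Projected relative entropy `E(P‖Q)`. -/
def projE (P Q : X × Y → ℝ) : ℝ :=
  sInf { d : ℝ | ∃ P' : X × Y → ℝ,
    IsDist P' ∧ margX P' = margX P ∧ margY P' = margY P ∧ d = relEnt P' Q }

/-- `R ∈ ℰ^{xy}(S)` : `R` has the same correlation coordinates as `S`. -/
def SameCorr (R S : X × Y → ℝ) : Prop :=
  ∃ a1 : X → ℝ, ∃ a2 : Y → ℝ,
    ∀ x : X, ∀ y : Y, Real.log (R (x, y) / S (x, y)) = a1 x + a2 y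

/-- The type (empirical distribution) of a sequence. -/
def empDist {n : ℕ} (x : Fin n → X) (a : X) : ℝ :=
  ((Finset.univ.filter fun i => x i = a).card : ℝ) / n

/-- The joint type of a pair of sequences. -/
def empJoint {n : ℕ} (x : Fin n → X) (y : Fin n → Y) (z : X × Y) : ℝ :=
  ((Finset.univ.filter fun i => x i = z.1 ∧ y i = z.2).card : ℝ) / n

/-- Probability of a set under the `n`-fold i.i.d. product of `P`. -/
def prodProb (P : X × Y → ℝ) (n : ℕ) (A : Set ((Fin n → X) × (Fin n → Y))) : ℝ :=
  ∑ z : (Fin n → X) × (Fin n → Y),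
    if z ∈ A then ∏ i : Fin n, P (z.1 i, z.2 i) else 0

/-- `P` is a joint type with denominator `n` (an element of `𝒫ₙ(𝒳 × 𝒴)`). -/
def IsTypeN (n : ℕ) (P : X × Y → ℝ) : Prop :=
  IsDist P ∧ ∀ z : X × Y, ∃ k : ℕ, P z = (k : ℝ) / n

/-- `Eₙ(P̄‖Q)` : projected relative entropy restricted to joint types. -/
def En (n : ℕ) (Pbar Q : X × Y → ℝ) : ℝ :=
  sInf { d : ℝ | ∃ Pt : X × Y → ℝ,
    IsTypeN n Pt ∧ margX Pt = margX Pbar ∧ margY Pt = margY Pbar ∧ d = relEnt Pt Q }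

/-- Standard normal cumulative distribution function `Φ`. -/
def stdNormalCDF (t : ℝ) : ℝ :=
  ∫ u in Set.Iic t, (Real.sqrt (2 * Real.pi))⁻¹ * Real.exp (-(u ^ 2) / 2)

/-- Inverse of the standard normal CDF, `Φ⁻¹`. -/
def stdNormalCDFInv (e : ℝ) : ℝ := Function.invFun stdNormalCDF e


/-- `t * log(t/q) = t*log t - t*log q` for `t ≥ 0`, `q > 0`. -/
lemma mul_log_div_eq {t q : ℝ} (ht : 0 ≤ t) (hq : 0 < q) :
    t * Real.log (t / q) = t * Real.log t - t * Real.log q := by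
  rcases eq_or_lt_of_le ht with h | h
  · simp [← h]
  · rw [Real.log_div h.ne' hq.ne', mul_sub]

/-- Pointwise convexity of `t ↦ t * log (t / q)`. -/
lemma pointwise_convex {a b q p : ℝ} (ha : 0 ≤ a) (hb : 0 ≤ b) (hq : 0 < q)
    (hp0 : 0 ≤ p) (hp1 : p ≤ 1) :
    (p * a + (1 - p) * b) * Real.log ((p * a + (1 - p) * b) / q)
      ≤ p * (a * Real.log (a / q)) + (1 - p) * (b * Real.log (b / q)) := by
  have hm : 0 ≤ p * a + (1 - p) * b :=
    add_nonneg (mul_nonneg hp0 ha) (mul_nonneg (by linarith) hb)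
  rw [mul_log_div_eq hm hq, mul_log_div_eq ha hq, mul_log_div_eq hb hq]
  have hconv := Real.convexOn_mul_log.2 (Set.mem_Ici.2 ha) (Set.mem_Ici.2 hb)
    hp0 (by linarith : (0:ℝ) ≤ 1 - p) (by ring)
  simp only [smul_eq_mul] at hconv
  nlinarith [hconv]

/-- Relative entropy is nonnegative. -/
lemma relEnt_nonneg {X Y : Type*} [Fintype X] [Fintype Y]
    {P Q : X × Y → ℝ} (hP : IsDist P) (hQ : IsPos Q) : 0 ≤ relEnt P Q := by
  have key : ∀ z : X × Y, -(P z * Real.log (P z / Q z)) ≤ Q z - P z := by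
    intro z
    rcases eq_or_lt_of_le (hP.1 z) with h | h
    · simp [← h]; exact (hQ.1 z).le
    · have hlog := Real.log_le_sub_one_of_pos (div_pos (hQ.1 z) h)
      have h1 : Real.log (P z / Q z) = Real.log (P z) - Real.log (Q z) :=
        Real.log_div h.ne' (hQ.1 z).ne'
      have h2 : Real.log (Q z / P z) = Real.log (Q z) - Real.log (P z) :=
        Real.log_div (hQ.1 z).ne' h.ne'
      have h3 : Q z / P z - 1 = (Q z - P z) / P z := by field_simp
      rw [h1]
      rw [h2, h3] at hlog
      have := mul_le_mul_of_nonneg_left hlog h.le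
      rw [mul_div_cancel₀ _ h.ne'] at this
      linarith
  have hsum : ∑ z : X × Y, -(P z * Real.log (P z / Q z)) ≤ ∑ z : X × Y, (Q z - P z) :=
    Finset.sum_le_sum (fun z _ => key z)
  rw [Finset.sum_sub_distrib, hP.2, hQ.2, Finset.sum_neg_distrib] at hsum
  have : -relEnt P Q ≤ 0 := by simpa [relEnt] using hsum
  linarith

/-- Any element of the feasibility set is nonnegative. -/
lemma projE_set_bddBelow {X Y : Type*} [Fintype X] [Fintype Y]
    {Q : X × Y → ℝ} (hQ : IsPos Q) (P : X × Y → ℝ) :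
    BddBelow { d : ℝ | ∃ P' : X × Y → ℝ,
      IsDist P' ∧ margX P' = margX P ∧ margY P' = margY P ∧ d = relEnt P' Q } := by
  refine ⟨0, fun d hd => ?_⟩
  obtain ⟨P', hP', _, _, rfl⟩ := hd
  exact relEnt_nonneg hP' hQ

/-- convexity of the projected relative entropy in its first argument. -/
theorem projE_convex_in_first_argument
    [Nonempty X] [Nonempty Y]
    (Q Pbar Ptil : X × Y → ℝ) (hQ : IsPos Q) (hPbar : IsDist Pbar) (hPtil : IsDist Ptil)
    (p : ℝ) (hp0 : 0 ≤ p) (hp1 : p ≤ 1) :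
    projE (fun z => p * Pbar z + (1 - p) * Ptil z) Q
      ≤ p * projE Pbar Q + (1 - p) * projE Ptil Q := by
  classical
  set S1 := { d : ℝ | ∃ P' : X × Y → ℝ,
    IsDist P' ∧ margX P' = margX Pbar ∧ margY P' = margY Pbar ∧ d = relEnt P' Q } with hS1
  set S2 := { d : ℝ | ∃ P' : X × Y → ℝ,
    IsDist P' ∧ margX P' = margX Ptil ∧ margY P' = margY Ptil ∧ d = relEnt P' Q } with hS2
  have hS1ne : S1.Nonempty := ⟨relEnt Pbar Q, Pbar, hPbar, rfl, rfl, rfl⟩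
  have hS2ne : S2.Nonempty := ⟨relEnt Ptil Q, Ptil, hPtil, rfl, rfl, rfl⟩
  have hS1bdd := projE_set_bddBelow hQ Pbar
  have hS2bdd := projE_set_bddBelow hQ Ptil
  refine le_of_forall_pos_le_add (fun ε hε => ?_)
  obtain ⟨a, haS, ha⟩ := Real.lt_sInf_add_pos hS1ne hε
  obtain ⟨b, hbS, hb⟩ := Real.lt_sInf_add_pos hS2ne hε
  obtain ⟨P1, hP1, hP1x, hP1y, rfl⟩ := haS
  obtain ⟨P2, hP2, hP2x, hP2y, rfl⟩ := hbS
  set Pm : X × Y → ℝ := fun z => p * P1 z + (1 - p) * P2 z with hPm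
  have hp1' : (0:ℝ) ≤ 1 - p := by linarith
  have hPmDist : IsDist Pm := by
    constructor
    · intro z
      exact add_nonneg (mul_nonneg hp0 (hP1.1 z)) (mul_nonneg hp1' (hP2.1 z))
    · simp only [hPm, Finset.sum_add_distrib, ← Finset.mul_sum, hP1.2, hP2.2]
      ring
  have hPmx : margX Pm = margX (fun z => p * Pbar z + (1 - p) * Ptil z) := by
    funext x
    have h1 := congrFun hP1x x
    have h2 := congrFun hP2x x
    simp only [margX, hPm, Finset.sum_add_distrib, ← Finset.mul_sum] at *
    rw [h1, h2]
  have hPmy : margY Pm = margY (fun z => p * Pbar z + (1 - p) * Ptil z) := by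
    funext y
    have h1 := congrFun hP1y y
    have h2 := congrFun hP2y y
    simp only [margY, hPm, Finset.sum_add_distrib, ← Finset.mul_sum] at *
    rw [h1, h2]
  have hmem : relEnt Pm Q ∈ { d : ℝ | ∃ P' : X × Y → ℝ,
      IsDist P' ∧ margX P' = margX (fun z => p * Pbar z + (1 - p) * Ptil z) ∧
      margY P' = margY (fun z => p * Pbar z + (1 - p) * Ptil z) ∧ d = relEnt P' Q } :=
    ⟨Pm, hPmDist, hPmx, hPmy, rfl⟩
  have step1 : projE (fun z => p * Pbar z + (1 - p) * Ptil z) Q ≤ relEnt Pm Q :=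
    csInf_le (projE_set_bddBelow hQ _) hmem
  have step2 : relEnt Pm Q ≤ p * relEnt P1 Q + (1 - p) * relEnt P2 Q := by
    simp only [relEnt, Finset.mul_sum, ← Finset.sum_add_distrib]
    exact Finset.sum_le_sum fun z _ =>
      pointwise_convex (hP1.1 z) (hP2.1 z) (hQ.1 z) hp0 hp1
  have step3 : p * relEnt P1 Q + (1 - p) * relEnt P2 Q
      ≤ p * sInf S1 + (1 - p) * sInf S2 + ε := by
    have h1 : p * relEnt P1 Q ≤ p * (sInf S1 + ε) :=
      mul_le_mul_of_nonneg_left ha.le hp0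
    have h2 : (1 - p) * relEnt P2 Q ≤ (1 - p) * (sInf S2 + ε) :=
      mul_le_mul_of_nonneg_left hb.le hp1'
    nlinarith
  calc projE (fun z => p * Pbar z + (1 - p) * Ptil z) Q
      ≤ p * relEnt P1 Q + (1 - p) * relEnt P2 Q := step1.trans step2
    _ ≤ p * sInf S1 + (1 - p) * sInf S2 + ε := step3
    _ = p * projE Pbar Q + (1 - p) * projE Ptil Q + ε := by rw [projE, projE]
end
end

section
/- Let P and Q be positive joint distributions on 𝒳 × 𝒴, and let P̃ and Q̃ be positive joint distributions with P̃ ∈ ℰ^{xy}(P), Q̃ ∈ ℰ^{xy}(Q), P̃_X = Q̃_X and P̃_Y = Q̃_Y. Then Σ_{x,y} P̃(x,y)·log(Q̃(x,y)/Q(x,y)) = D(Q̃‖Q). -/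
open scoped Classical BigOperators

noncomputable section

variable {X Y : Type*} [Fintype X] [Fintype Y]

lemma sum_mul_additive (f : X × Y → ℝ) (b1 : X → ℝ) (b2 : Y → ℝ) :
    ∑ z : X × Y, f z * (b1 z.1 + b2 z.2) =
      ∑ x : X, margX f x * b1 x + ∑ y : Y, margY f y * b2 y := by
  simp only [mul_add, Finset.sum_add_distrib, Fintype.sum_prod_type, margX, margY,
    Finset.sum_mul]
  congr 1
  exact Finset.sum_comm

/-- Corollary of the Pythagorean identity. -/
theorem sum_log_ratio_eq_relEnt
    [Nonempty X] [Nonempty Y]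
    (P Q Ptil Qtil : X × Y → ℝ)
    (hP : IsPos P) (hQ : IsPos Q) (hPtil : IsPos Ptil) (hQtil : IsPos Qtil)
    (hPcorr : SameCorr Ptil P) (hQcorr : SameCorr Qtil Q)
    (hmargX : margX Ptil = margX Qtil) (hmargY : margY Ptil = margY Qtil) :
    ∑ z : X × Y, Ptil z * Real.log (Qtil z / Q z) = relEnt Qtil Q := by
  obtain ⟨b1, b2, hb⟩ := hQcorr
  have h1 : ∀ z : X × Y, Real.log (Qtil z / Q z) = b1 z.1 + b2 z.2 := fun z => hb z.1 z.2
  calc ∑ z : X × Y, Ptil z * Real.log (Qtil z / Q z)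
      = ∑ z : X × Y, Ptil z * (b1 z.1 + b2 z.2) := by simp_rw [h1]
    _ = ∑ x : X, margX Ptil x * b1 x + ∑ y : Y, margY Ptil y * b2 y :=
        sum_mul_additive Ptil b1 b2
    _ = ∑ x : X, margX Qtil x * b1 x + ∑ y : Y, margY Qtil y * b2 y := by
        rw [hmargX, hmargY]
    _ = ∑ z : X × Y, Qtil z * (b1 z.1 + b2 z.2) := (sum_mul_additive Qtil b1 b2).symm
    _ = relEnt Qtil Q := by simp_rw [relEnt, h1]
end
end

section
/- Let P and Q be positive joint distributions on 𝒳 × 𝒴 and let P* be a minimizer of min{ D(P̃‖Q) : P̃ a joint distribution with P̃_X = P_X and P̃_Y = P_Y }. Define the projected relative entropy density ȷ_{P‖Q}(x,y) = log(P*(x,y)/Q(x,y)). Then the expectation of ȷ_{P‖Q} under P equals the projected relative entropy: Σ_{x,y} P(x,y)·ȷ_{P‖Q}(x,y) = E(P‖Q). -/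
open scoped Classical BigOperators

noncomputable section

variable {X Y : Type*} [Fintype X] [Fintype Y]

lemma term_ge (p q : ℝ) (hp : 0 ≤ p) (hq : 0 < q) : p - q ≤ p * Real.log (p / q) := by
  rcases eq_or_lt_of_le hp with h | h
  · simp [← h]; linarith
  · have h1 : Real.log (q / p) ≤ q / p - 1 := Real.log_le_sub_one_of_pos (by positivity)
    have h2 : Real.log (q / p) = - Real.log (p / q) := by
      rw [← Real.log_inv, inv_div]
    have h3 : 1 - q / p ≤ Real.log (p / q) := by rw [h2] at h1; linarith
    have h4 := mul_le_mul_of_nonneg_left h3 hp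
    have h5 : p * (1 - q / p) = p - q := by field_simp
    linarith

lemma xlogx_id (x q : ℝ) (hx : 0 ≤ x) (hq : 0 < q) :
    x * Real.log (x / q) = x * Real.log x - x * Real.log q := by
  rcases eq_or_lt_of_le hx with h | h
  · simp [← h]
  · rw [Real.log_div h.ne' hq.ne']; ring

lemma chord (p p' q t : ℝ) (hp : 0 ≤ p) (hp' : 0 ≤ p') (hq : 0 < q) (ht0 : 0 ≤ t) (ht1 : t ≤ 1) :
    ((1-t)*p + t*p') * Real.log (((1-t)*p + t*p')/q)
      ≤ (1-t) * (p * Real.log (p/q)) + t * (p' * Real.log (p'/q)) := by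
  have ha : 0 ≤ (1-t)*p + t*p' :=
    add_nonneg (mul_nonneg (by linarith) hp) (mul_nonneg ht0 hp')
  have hc := Real.convexOn_mul_log.2 (Set.mem_Ici.2 hp) (Set.mem_Ici.2 hp')
    (by linarith : (0:ℝ) ≤ 1 - t) ht0 (by ring)
  simp only [smul_eq_mul] at hc
  rw [xlogx_id _ _ ha hq, xlogx_id _ _ hp hq, xlogx_id _ _ hp' hq]
  nlinarith [hc]

lemma pert (p q s : ℝ) (hp : 0 < p) (hq : 0 < q) (hs : |s| ≤ p/2) :
    (p + s) * Real.log ((p + s)/q) ≤ p * Real.log (p/q) + s*(Real.log (p/q) + 1) + s^2/p := by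
  have hs' : -(p/2) ≤ s := neg_le_of_abs_le hs
  have ha : 0 < p + s := by linarith
  have h1 : Real.log ((p+s)/p) ≤ s/p := by
    have h := Real.log_le_sub_one_of_pos (show 0 < (p+s)/p by positivity)
    have h' : (p+s)/p - 1 = s/p := by field_simp; ring
    linarith
  have hsplit : Real.log ((p+s)/q) = Real.log ((p+s)/p) + Real.log (p/q) := by
    rw [← Real.log_mul (by positivity) (by positivity)]
    congr 1
    field_simp
  rw [hsplit]
  have h2 : (p+s) * Real.log ((p+s)/p) ≤ (p+s)*(s/p) := mul_le_mul_of_nonneg_left h1 ha.le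
  have h3 : (p+s)*(s/p) = s + s^2/p := by field_simp
  nlinarith [h2]

/-- the expectation of the projected relative entropy density under `P`
equals the projected relative entropy. -/
theorem expectation_projected_density
    [Nonempty X] [Nonempty Y]
    (P Q Ps : X × Y → ℝ) (hP : IsPos P) (hQ : IsPos Q)
    (hPs : IsDist Ps) (hPsX : margX Ps = margX P) (hPsY : margY Ps = margY P)
    (hmin : relEnt Ps Q = projE P Q) :
    ∑ z : X × Y, P z * Real.log (Ps z / Q z) = projE P Q := by
  classical
  have hbdd : BddBelow {d : ℝ | ∃ P' : X × Y → ℝ,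
      IsDist P' ∧ margX P' = margX P ∧ margY P' = margY P ∧ d = relEnt P' Q} := by
    refine ⟨0, ?_⟩
    rintro d ⟨P', h1, -, -, rfl⟩
    have hsum : ∑ z : X × Y, (P' z - Q z) ≤ relEnt P' Q :=
      Finset.sum_le_sum fun z _ => term_ge _ _ (h1.1 z) (hQ.1 z)
    rw [Finset.sum_sub_distrib, h1.2, hQ.2] at hsum
    simpa using hsum
  have hmin' : ∀ P' : X × Y → ℝ, IsDist P' → margX P' = margX P → margY P' = margY P →
      relEnt Ps Q ≤ relEnt P' Q := by
    intro P' h1 h2 h3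
    rw [hmin, projE]
    exact csInf_le hbdd ⟨P', h1, h2, h3, rfl⟩
  -- feasibility of affine combinations
  have hfeas : ∀ t : ℝ, (∀ z, 0 ≤ (1-t) * Ps z + t * P z) →
      relEnt Ps Q ≤ relEnt (fun z => (1-t) * Ps z + t * P z) Q := by
    intro t hnn
    refine hmin' _ ⟨hnn, ?_⟩ ?_ ?_
    · rw [Finset.sum_add_distrib, ← Finset.mul_sum, ← Finset.mul_sum, hPs.2, hP.2]; ring
    · funext x
      have hx := congrFun hPsX x
      simp only [margX] at hx ⊢
      rw [Finset.sum_add_distrib, ← Finset.mul_sum, ← Finset.mul_sum, hx]; ring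
    · funext y
      have hy := congrFun hPsY y
      simp only [margY] at hy ⊢
      rw [Finset.sum_add_distrib, ← Finset.mul_sum, ← Finset.mul_sum, hy]; ring
  -- Step 1 : the minimizer is everywhere positive
  have hpos : ∀ z, 0 < Ps z := by
    by_contra hcon
    push_neg at hcon
    obtain ⟨z0, hz0⟩ := hcon
    have hz0' : Ps z0 = 0 := le_antisymm hz0 (hPs.1 z0)
    set Z : Finset (X × Y) := Finset.univ.filter fun z => Ps z = 0 with hZdef
    have hz0Z : z0 ∈ Z := Finset.mem_filter.2 ⟨Finset.mem_univ _, hz0'⟩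
    set c : ℝ := ∑ z ∈ Z, P z with hcdef
    have hcpos : 0 < c := Finset.sum_pos (fun z _ => hP.1 z) ⟨z0, hz0Z⟩
    set K : ℝ := ∑ z ∈ Zᶜ, (P z * Real.log (P z / Q z) - Ps z * Real.log (Ps z / Q z))
        + ∑ z ∈ Z, P z * Real.log (P z / Q z) with hKdef
    set t : ℝ := min (1/2) (Real.exp (-(K/c) - 1)) with htdef
    have ht0 : 0 < t := lt_min (by norm_num) (Real.exp_pos _)
    have ht1 : t ≤ 1 := (min_le_left _ _).trans (by norm_num)
    have hnn : ∀ z, 0 ≤ (1-t) * Ps z + t * P z := fun z =>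
      add_nonneg (mul_nonneg (by linarith) (hPs.1 z)) (mul_nonneg ht0.le (hP.1 z).le)
    have hle := hfeas t hnn
    have hZ0 : ∀ z ∈ Z, Ps z = 0 := fun z hz => (Finset.mem_filter.1 hz).2
    have hZc : ∀ z ∈ Zᶜ, 0 < Ps z := by
      intro z hz
      rcases (hPs.1 z).lt_or_eq with h | h
      · exact h
      · exact absurd (Finset.mem_filter.2 ⟨Finset.mem_univ z, h.symm⟩) (Finset.mem_compl.1 hz)
    have hub : relEnt (fun z => (1-t) * Ps z + t * P z) Q
        ≤ relEnt Ps Q + t * K + t * Real.log t * c := by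
      have e1 : relEnt (fun z => (1-t) * Ps z + t * P z) Q
          = ∑ z ∈ Z, ((1-t) * Ps z + t * P z) * Real.log (((1-t) * Ps z + t * P z) / Q z)
            + ∑ z ∈ Zᶜ, ((1-t) * Ps z + t * P z) * Real.log (((1-t) * Ps z + t * P z) / Q z) :=
        (Finset.sum_add_sum_compl Z _).symm
      have e2 : relEnt Ps Q = ∑ z ∈ Zᶜ, Ps z * Real.log (Ps z / Q z) := by
        rw [relEnt, ← Finset.sum_add_sum_compl Z, Finset.sum_eq_zero (fun z hz => by
          rw [hZ0 z hz]; simp), zero_add]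
      have bZ : ∑ z ∈ Z, ((1-t) * Ps z + t * P z) * Real.log (((1-t) * Ps z + t * P z) / Q z)
          = t * Real.log t * c + t * ∑ z ∈ Z, P z * Real.log (P z / Q z) := by
        rw [hcdef, Finset.mul_sum, Finset.mul_sum, ← Finset.sum_add_distrib]
        refine Finset.sum_congr rfl fun z hz => ?_
        rw [hZ0 z hz]
        have h0 : (1-t) * 0 + t * P z = t * P z := by ring
        rw [h0]
        have h1 : t * P z / Q z = t * (P z / Q z) := by ring
        rw [h1, Real.log_mul ht0.ne' (ne_of_gt (div_pos (hP.1 z) (hQ.1 z)))]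
        ring
      have bZc : ∑ z ∈ Zᶜ, ((1-t) * Ps z + t * P z) * Real.log (((1-t) * Ps z + t * P z) / Q z)
          ≤ (1-t) * ∑ z ∈ Zᶜ, Ps z * Real.log (Ps z / Q z)
            + t * ∑ z ∈ Zᶜ, P z * Real.log (P z / Q z) := by
        rw [Finset.mul_sum, Finset.mul_sum, ← Finset.sum_add_distrib]
        exact Finset.sum_le_sum fun z hz =>
          chord _ _ _ _ (hPs.1 z) (hP.1 z).le (hQ.1 z) ht0.le ht1
      rw [e1, e2, hKdef]
      rw [Finset.sum_sub_distrib]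
      linarith [bZ, bZc]
    have hlogt : Real.log t ≤ -(K/c) - 1 := by
      have h := Real.log_le_log ht0 (min_le_right (1/2 : ℝ) (Real.exp (-(K/c) - 1)))
      rwa [Real.log_exp] at h
    have hck : c * Real.log t ≤ -K - c := by
      have h := mul_le_mul_of_nonneg_left hlogt hcpos.le
      have h3 : c * (-(K / c) - 1) = -K - c := by field_simp
      exact h.trans (le_of_eq h3)
    nlinarith [hle, hub, mul_pos ht0 hcpos, mul_le_mul_of_nonneg_left hck ht0.le]
  -- Step 2 : first-order optimality gives the key identity
  have hne : (Finset.univ : Finset (X × Y)).Nonempty := Finset.univ_nonempty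
  set m : ℝ := Finset.univ.inf' hne Ps with hmdef
  have hm0 : 0 < m := (Finset.lt_inf'_iff hne).2 fun z _ => hpos z
  have hmle : ∀ z, m ≤ Ps z := fun z => Finset.inf'_le _ (Finset.mem_univ z)
  set M : ℝ := (∑ z : X × Y, |P z - Ps z|) + 1 with hMdef
  have hM0 : 0 < M := by
    have : 0 ≤ ∑ z : X × Y, |P z - Ps z| := Finset.sum_nonneg fun z _ => abs_nonneg _
    linarith
  have hMle : ∀ z, |P z - Ps z| ≤ M := by
    intro z
    have h := Finset.single_le_sum (f := fun z : X × Y => |P z - Ps z|)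
      (fun z _ => abs_nonneg _) (Finset.mem_univ z)
    linarith
  set C : ℝ := ∑ z : X × Y, (P z - Ps z)^2 / Ps z with hCdef
  have hC0 : 0 ≤ C := Finset.sum_nonneg fun z _ => div_nonneg (sq_nonneg _) (hpos z).le
  set Δ : ℝ := ∑ z : X × Y, (P z - Ps z) * Real.log (Ps z / Q z) with hΔdef
  set ε : ℝ := m / (2 * M) with hεdef
  have hε0 : 0 < ε := by positivity
  have key : ∀ t : ℝ, |t| ≤ ε → 0 ≤ t * Δ + t^2 * C := by
    intro t ht
    have habs : ∀ z, |t * (P z - Ps z)| ≤ Ps z / 2 := by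
      intro z
      rw [abs_mul]
      calc |t| * |P z - Ps z| ≤ ε * M :=
            mul_le_mul ht (hMle z) (abs_nonneg _) hε0.le
        _ = m / 2 := by rw [hεdef]; field_simp
        _ ≤ Ps z / 2 := by linarith [hmle z]
    have hnn : ∀ z, 0 ≤ (1-t) * Ps z + t * P z := by
      intro z
      have h1 := neg_le_of_abs_le (habs z)
      have h2 : (1-t) * Ps z + t * P z = Ps z + t * (P z - Ps z) := by ring
      rw [h2]; linarith [hpos z]
    have hle := hfeas t hnn
    have hzero : ∑ z : X × Y, (P z - Ps z) = 0 := by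
      rw [Finset.sum_sub_distrib, hP.2, hPs.2]; ring
    have hub : relEnt (fun z => (1-t) * Ps z + t * P z) Q
        ≤ relEnt Ps Q + t * Δ + t^2 * C := by
      have hper : ∀ z : X × Y,
          ((1-t) * Ps z + t * P z) * Real.log (((1-t) * Ps z + t * P z) / Q z)
          ≤ Ps z * Real.log (Ps z / Q z)
            + (t * ((P z - Ps z) * Real.log (Ps z / Q z)) + t * (P z - Ps z))
            + t^2 * ((P z - Ps z)^2 / Ps z) := by
        intro z
        have h2 : (1-t) * Ps z + t * P z = Ps z + t * (P z - Ps z) := by ring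
        rw [h2]
        have h3 := pert (Ps z) (Q z) (t * (P z - Ps z)) (hpos z) (hQ.1 z) (habs z)
        have h4 : (t * (P z - Ps z))^2 / Ps z = t^2 * ((P z - Ps z)^2 / Ps z) := by
          rw [mul_pow, mul_div_assoc]
        nlinarith [h3]
      have hsum := Finset.sum_le_sum fun z (_ : z ∈ Finset.univ) => hper z
      have hRHS : ∑ z : X × Y, (Ps z * Real.log (Ps z / Q z)
            + (t * ((P z - Ps z) * Real.log (Ps z / Q z)) + t * (P z - Ps z))
            + t^2 * ((P z - Ps z)^2 / Ps z))
          = relEnt Ps Q + (t * Δ + t * 0) + t^2 * C := by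
        rw [relEnt, hΔdef, hCdef, ← hzero]
        rw [Finset.sum_add_distrib, Finset.sum_add_distrib, Finset.sum_add_distrib,
          ← Finset.mul_sum, ← Finset.mul_sum, ← Finset.mul_sum]
      rw [hRHS] at hsum
      calc relEnt (fun z => (1-t) * Ps z + t * P z) Q
          ≤ relEnt Ps Q + (t * Δ + t * 0) + t^2 * C := hsum
        _ = relEnt Ps Q + t * Δ + t^2 * C := by ring
    linarith
  have hΔ0 : Δ = 0 := by
    by_contra hne0
    have hΔsq : 0 < Δ^2 := by positivity
    set δ : ℝ := min (ε / (|Δ| + 1)) (1 / (2 * (C + 1))) with hδdef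
    have habsΔ : 0 < |Δ| := abs_pos.2 hne0
    have hδ0 : 0 < δ := lt_min (by positivity) (by positivity)
    have h1 : |(-δ) * Δ| ≤ ε := by
      rw [abs_mul, abs_neg, abs_of_pos hδ0]
      have ha : δ ≤ ε / (|Δ| + 1) := min_le_left _ _
      have hb : δ * |Δ| ≤ (ε / (|Δ| + 1)) * |Δ| :=
        mul_le_mul_of_nonneg_right ha (abs_nonneg _)
      have hc : (ε / (|Δ| + 1)) * |Δ| ≤ ε := by
        rw [div_mul_eq_mul_div, div_le_iff₀ (by positivity)]
        nlinarith
      linarith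
    have h2 := key ((-δ) * Δ) h1
    have hδC : δ * C ≤ 1/2 := by
      have ha : δ ≤ 1 / (2 * (C + 1)) := min_le_right _ _
      have hb : δ * C ≤ (1 / (2 * (C + 1))) * C :=
        mul_le_mul_of_nonneg_right ha hC0
      have hc : (1 / (2 * (C + 1))) * C ≤ 1/2 := by
        rw [div_mul_eq_mul_div, div_le_iff₀ (by positivity)]
        nlinarith
      linarith
    have e : ((-δ) * Δ) * Δ + ((-δ) * Δ)^2 * C = -(δ * Δ^2) + (δ * Δ^2) * (δ * C) := by ring
    rw [e] at h2
    have e3 : (δ * Δ^2) * (δ * C) ≤ (δ * Δ^2) * (1/2) :=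
      mul_le_mul_of_nonneg_left hδC (mul_pos hδ0 hΔsq).le
    have e4 : 0 < δ * Δ^2 := mul_pos hδ0 hΔsq
    linarith
  have hfin : ∑ z : X × Y, P z * Real.log (Ps z / Q z)
      - ∑ z : X × Y, Ps z * Real.log (Ps z / Q z) = Δ := by
    rw [hΔdef, ← Finset.sum_sub_distrib]
    exact Finset.sum_congr rfl fun z _ => by ring
  have hre : relEnt Ps Q = ∑ z : X × Y, Ps z * Real.log (Ps z / Q z) := rfl
  rw [← hmin]
  rw [hre]
  linarith [hfin, hΔ0]
end
end

section
/- Let P and Q be positive joint distributions on 𝒳 × 𝒴, let n ≥ 1 and r > 0. For a joint type P̄ ∈ 𝒫_n(𝒳 × 𝒴), define E_n(P̄‖Q) = min{ D(P̃‖Q) : P̃ ∈ 𝒫_n(𝒳 × 𝒴), P̃_X = P̄_X, P̃_Y = P̄_Y }. Let A ⊆ 𝒳ⁿ × 𝒴ⁿ be an acceptance region that depends only on the pair of marginal types, i.e., if t_x = t_{x'} and t_y = t_{y'} then (x,y) ∈ A ⇔ (x',y') ∈ A. If Q^n(A) ≤ exp(−r·n), then P^n((𝒳ⁿ × 𝒴ⁿ)∖A)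 ≥ P^n({(x,y) : E_n(t_{xy}‖Q) < r − (|𝒳||𝒴|−1)·log(n+1)/n}). -/
open scoped Classical BigOperators

noncomputable section

variable {X Y : Type*} [Fintype X] [Fintype Y]

section A
open Finset
namespace SSC

variable {Z : Type*} [Fintype Z]

/-- count of occurrences of `a` in `f` -/
noncomputable def cnt {n : ℕ} (f : Fin n → Z) (a : Z) : ℕ := (univ.filter fun i => f i = a).card

lemma sum_cnt {n : ℕ} (f : Fin n → Z) : ∑ a : Z, cnt f a = n := by
  classical
  have := Finset.card_eq_sum_card_fiberwise (s := (univ : Finset (Fin n)))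
    (t := (univ : Finset Z)) (f := f) (fun i _ => mem_univ (f i))
  simpa [cnt] using this.symm

lemma prod_pow_cnt {n : ℕ} (Q : Z → ℝ) (f : Fin n → Z) :
    ∏ i, Q (f i) = ∏ a, Q a ^ cnt f a := by
  classical
  rw [← Finset.prod_fiberwise_of_maps_to (g := f) (t := (univ : Finset Z))
    (fun i _ => mem_univ (f i)) (fun i => Q (f i))]
  refine Finset.prod_congr rfl fun a _ => ?_
  rw [show (∏ i ∈ univ.filter fun i => f i = a, Q (f i)) = ∏ i ∈ univ.filter fun i => f i = a, Q a
      from Finset.prod_congr rfl fun i hi => by rw [(mem_filter.mp hi).2]]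
  simp [cnt]

lemma aux1 : ∀ k l : ℕ, l ≤ k → Nat.factorial k ≤ Nat.factorial l * k ^ (k - l) := by
  intro k
  induction k with
  | zero => intro l hl; interval_cases l; simp
  | succ k ih =>
    intro l hl
    rcases Nat.eq_or_lt_of_le hl with h | h
    · subst h; simp
    · have hlk : l ≤ k := Nat.lt_succ_iff.mp h
      calc (k+1).factorial = (k+1) * k.factorial := rfl
        _ ≤ (k+1) * (l.factorial * k ^ (k - l)) := Nat.mul_le_mul_left _ (ih l hlk)
        _ ≤ (k+1) * (l.factorial * (k+1) ^ (k - l)) := by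
            exact Nat.mul_le_mul_left _ (Nat.mul_le_mul_left _ (Nat.pow_le_pow_left (by omega) _))
        _ = l.factorial * (k+1) ^ (k - l + 1) := by ring
        _ = l.factorial * (k+1) ^ (k + 1 - l) := by congr 2; omega

lemma aux2 : ∀ k l : ℕ, k ≤ l → k ^ (l - k) * Nat.factorial k ≤ Nat.factorial l := by
  intro k l
  induction l with
  | zero => intro h; interval_cases k; simp
  | succ l ih =>
    intro hk
    rcases Nat.eq_or_lt_of_le hk with h | h
    · subst h; simp
    · have hkl : k ≤ l := Nat.lt_succ_iff.mp h
      have h1 : l + 1 - k = (l - k) + 1 := by omega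
      rw [h1, pow_succ]
      calc k ^ (l - k) * k * k.factorial = k * (k ^ (l - k) * k.factorial) := by ring
        _ ≤ k * l.factorial := Nat.mul_le_mul_left _ (ih hkl)
        _ ≤ (l+1) * l.factorial := Nat.mul_le_mul_right _ (by omega)
        _ = (l+1).factorial := rfl

lemma key_nat (k l : ℕ) : k ^ l * Nat.factorial k ≤ k ^ k * Nat.factorial l := by
  rcases le_total l k with h | h
  · calc k ^ l * k.factorial ≤ k ^ l * (l.factorial * k ^ (k - l)) :=
        Nat.mul_le_mul_left _ (aux1 k l h)
      _ = k ^ (l + (k - l)) * l.factorial := by rw [pow_add]; ring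
      _ = k ^ k * l.factorial := by congr 2; omega
  · have h2 : k ^ l * k.factorial = k ^ k * (k ^ (l - k) * k.factorial) := by
      rw [← mul_assoc, ← pow_add]
      congr 2
      omega
    rw [h2]
    exact Nat.mul_le_mul_left _ (aux2 k l h)

end SSC

end A

section B
open Finset
namespace SSC
variable {Z : Type*} [Fintype Z]

lemma congr_fiber {n : ℕ} {f f₀ : Fin n → Z}
    (e : (a : Z) → ({i : Fin n // f i = a} ≃ {j : Fin n // f₀ j = a}))
    {a b : Z} (hab : a = b) (i : Fin n) (hi : f i = a) :
    ((e a ⟨i, hi⟩ : {j // f₀ j = a}) : Fin n) = ((e b ⟨i, hab ▸ hi⟩ : {j // f₀ j = b}) : Fin n) := by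
  subst hab; rfl

noncomputable def permFiberEquiv {n : ℕ} (f f₀ : Fin n → Z) :
    {σ : Equiv.Perm (Fin n) // f₀ ∘ ⇑σ = f} ≃
      ((a : Z) → ({i : Fin n // f i = a} ≃ {j : Fin n // f₀ j = a})) where
  toFun := fun σ a => Equiv.subtypeEquiv σ.1 (fun i => by
    have := congrFun σ.2 i
    simp only [Function.comp_apply] at this
    rw [this])
  invFun := fun e => by
    refine ⟨Equiv.ofBijective (fun i => ((e (f i)) ⟨i, rfl⟩ : {j // f₀ j = f i})) ?_, ?_⟩
    · rw [← Finite.injective_iff_bijective]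
      intro i j h
      have hfi : f₀ (((e (f i)) ⟨i, rfl⟩ : {j // f₀ j = f i}) : Fin n) = f i :=
        ((e (f i)) ⟨i, rfl⟩).2
      have hfj : f₀ (((e (f j)) ⟨j, rfl⟩ : {j' // f₀ j' = f j}) : Fin n) = f j :=
        ((e (f j)) ⟨j, rfl⟩).2
      have hf : f i = f j := by rw [← hfi, ← hfj]; exact congrArg f₀ h
      have h2 : ((e (f j)) ⟨j, rfl⟩ : {j' // f₀ j' = f j}).1
          = ((e (f i)) ⟨j, hf.symm ▸ rfl⟩ : {j' // f₀ j' = f i}).1 :=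
        congr_fiber e hf.symm j rfl
      have h3 : ((e (f i)) ⟨i, rfl⟩ : {j' // f₀ j' = f i})
          = ((e (f i)) ⟨j, hf.symm ▸ rfl⟩ : {j' // f₀ j' = f i}) :=
        Subtype.ext (by rw [← h2]; exact h)
      have h4 := (e (f i)).injective h3
      exact congrArg Subtype.val h4
    · funext i
      exact ((e (f i)) ⟨i, rfl⟩).2
  left_inv := fun σ => by
    apply Subtype.ext
    apply Equiv.ext
    intro i
    rfl
  right_inv := fun e => by
    funext a
    apply Equiv.ext
    intro x
    obtain ⟨i, hi⟩ := x
    apply Subtype.ext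
    show ((e (f i)) ⟨i, rfl⟩ : {j // f₀ j = f i}).1 = _
    exact congr_fiber e hi i rfl

lemma card_fiber_perm {n : ℕ} (f f₀ : Fin n → Z) (hcnt : cnt f = cnt f₀) :
    Fintype.card {σ : Equiv.Perm (Fin n) // f₀ ∘ ⇑σ = f} = ∏ a, (cnt f a).factorial := by
  classical
  rw [Fintype.card_congr (permFiberEquiv f f₀), Fintype.card_pi]
  refine Finset.prod_congr rfl fun a _ => ?_
  have h1 : Fintype.card {i : Fin n // f i = a} = cnt f a := by
    simp [cnt, Fintype.card_subtype]
  have h2 : Fintype.card {j : Fin n // f₀ j = a} = cnt f a := by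
    have h3 := congrFun hcnt a
    simp only [cnt] at h3 ⊢
    rw [Fintype.card_subtype]
    exact h3.symm
  have e : {i : Fin n // f i = a} ≃ {j : Fin n // f₀ j = a} :=
    Fintype.equivOfCardEq (by rw [h1, h2])
  rw [Fintype.card_equiv e, h1]

lemma cnt_comp_perm {n : ℕ} (f₀ : Fin n → Z) (σ : Equiv.Perm (Fin n)) :
    cnt (f₀ ∘ ⇑σ) = cnt f₀ := by
  classical
  funext a
  have h : Fintype.card {i : Fin n // f₀ (σ i) = a} = Fintype.card {j : Fin n // f₀ j = a} :=
    Fintype.card_congr (σ.subtypeEquiv fun i => Iff.rfl)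
  simp only [Fintype.card_subtype] at h
  simpa [cnt] using h

lemma typeclass_card {n : ℕ} (k : Z → ℕ) (f₀ : Fin n → Z) (h₀ : cnt f₀ = k) :
    ((univ.filter fun f : Fin n → Z => cnt f = k).card) * ∏ a, (k a).factorial
      = n.factorial := by
  classical
  have hperm : Fintype.card (Equiv.Perm (Fin n)) = n.factorial := by
    simp [Fintype.card_perm]
  have hmaps : ∀ σ ∈ (univ : Finset (Equiv.Perm (Fin n))),
      (f₀ ∘ ⇑σ) ∈ (univ.filter fun f : Fin n → Z => cnt f = k) := by
    intro σ _
    simp [mem_filter, cnt_comp_perm, h₀]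
  have hcard := Finset.card_eq_sum_card_fiberwise hmaps
  rw [Finset.card_univ, hperm] at hcard
  rw [hcard]
  rw [Finset.sum_congr rfl (fun f hf => ?_), Finset.sum_const, smul_eq_mul]
  have hf' : cnt f = k := (mem_filter.mp hf).2
  have : (univ.filter fun σ : Equiv.Perm (Fin n) => f₀ ∘ ⇑σ = f).card
      = Fintype.card {σ : Equiv.Perm (Fin n) // f₀ ∘ ⇑σ = f} := by
    rw [Fintype.card_subtype]
  rw [this, card_fiber_perm f f₀ (by rw [hf', h₀]), hf']

end SSC
end B

section C
open Finset
namespace SSC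
variable {Z : Type*} [Fintype Z]

lemma exists_seq_of_counts {n : ℕ} (k : Z → ℕ) (hk : ∑ a, k a = n) :
    ∃ f₀ : Fin n → Z, cnt f₀ = k := by
  classical
  have hcard : Fintype.card (Σ a : Z, Fin (k a)) = Fintype.card (Fin n) := by
    simp [Fintype.card_sigma, hk]
  obtain ⟨eqv⟩ : Nonempty (Fin n ≃ Σ a : Z, Fin (k a)) := ⟨(Fintype.equivOfCardEq hcard).symm⟩
  refine ⟨fun i => (eqv i).1, ?_⟩
  funext a
  have e2 : {s : Σ a' : Z, Fin (k a') // s.1 = a} ≃ Fin (k a) :=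
    { toFun := fun s => ⟨s.1.2.1, lt_of_lt_of_le s.1.2.isLt (le_of_eq (congrArg k s.2))⟩
      invFun := fun x => ⟨⟨a, x⟩, rfl⟩
      left_inv := by rintro ⟨⟨a', ⟨v, hv⟩⟩, h⟩; dsimp only at h; subst h; rfl
      right_inv := by rintro ⟨v, hv⟩; rfl }
  have h1 : Fintype.card {i : Fin n // (eqv i).1 = a} = k a := by
    rw [Fintype.card_congr ((eqv.subtypeEquiv fun i => Iff.rfl).trans e2), Fintype.card_fin]
  simp only [Fintype.card_subtype] at h1
  simpa [cnt] using h1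

lemma compare_nat {n : ℕ} (k l : Z → ℕ) (hk : ∑ a, k a = n) (hl : ∑ a, l a = n) :
    ((univ.filter fun f : Fin n → Z => cnt f = l).card) * ∏ a, (k a) ^ (l a)
      ≤ ((univ.filter fun f : Fin n → Z => cnt f = k).card) * ∏ a, (k a) ^ (k a) := by
  classical
  obtain ⟨fk, hfk⟩ := exists_seq_of_counts k hk
  obtain ⟨fl, hfl⟩ := exists_seq_of_counts l hl
  have tck := typeclass_card k fk hfk
  have tcl := typeclass_card l fl hfl
  set Nk := (univ.filter fun f : Fin n → Z => cnt f = k).card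
  set Nl := (univ.filter fun f : Fin n → Z => cnt f = l).card
  have hC : 0 < (∏ a, (k a).factorial) * (∏ a, (l a).factorial) :=
    Nat.mul_pos (Finset.prod_pos fun a _ => (k a).factorial_pos)
      (Finset.prod_pos fun a _ => (l a).factorial_pos)
  have key : ∀ a : Z, (k a) ^ (l a) * (k a).factorial ≤ (k a) ^ (k a) * (l a).factorial :=
    fun a => key_nat (k a) (l a)
  have hprod : ∏ a, ((k a) ^ (l a) * (k a).factorial) ≤ ∏ a, ((k a) ^ (k a) * (l a).factorial) :=
    Finset.prod_le_prod (fun a _ => Nat.zero_le _) (fun a _ => key a)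
  have h1 : (Nl * ∏ a, (k a) ^ (l a)) * ((∏ a, (k a).factorial) * (∏ a, (l a).factorial))
      = n.factorial * ∏ a, ((k a) ^ (l a) * (k a).factorial) := by
    rw [Finset.prod_mul_distrib, ← tcl]; ring
  have h2 : (Nk * ∏ a, (k a) ^ (k a)) * ((∏ a, (k a).factorial) * (∏ a, (l a).factorial))
      = n.factorial * ∏ a, ((k a) ^ (k a) * (l a).factorial) := by
    rw [Finset.prod_mul_distrib, ← tck]; ring
  have := Nat.mul_le_mul_left n.factorial hprod
  rw [← h1, ← h2] at this
  exact Nat.le_of_mul_le_mul_right this hC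

lemma compare_real {n : ℕ} (hn : 0 < n) (k l : Z → ℕ) (hk : ∑ a, k a = n) (hl : ∑ a, l a = n) :
    ((univ.filter fun f : Fin n → Z => cnt f = l).card : ℝ) * ∏ a, ((k a : ℝ)/n) ^ (l a)
      ≤ ((univ.filter fun f : Fin n → Z => cnt f = k).card : ℝ) * ∏ a, ((k a : ℝ)/n) ^ (k a) := by
  have hnn : (0:ℝ) < (n:ℝ) ^ n := by positivity
  have expand : ∀ (m : Z → ℕ), (∑ a, m a = n) →
      (∏ a, ((k a : ℝ)/n) ^ (m a)) = (∏ a, ((k a : ℕ) : ℝ) ^ (m a)) / (n:ℝ) ^ n := by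
    intro m hm
    rw [eq_div_iff (ne_of_gt hnn)]
    rw [show ((n:ℝ)) ^ n = ∏ a, ((n:ℝ)) ^ (m a) by rw [Finset.prod_pow_eq_pow_sum, hm],
      ← Finset.prod_mul_distrib]
    refine Finset.prod_congr rfl fun a _ => ?_
    rw [div_pow, div_mul_cancel₀]
    positivity
  rw [expand l hl, expand k hk, ← mul_div_assoc, ← mul_div_assoc]
  have hnat := compare_nat k l hk hl
  have hcast : ((univ.filter fun f : Fin n → Z => cnt f = l).card : ℝ) * ∏ a, ((k a : ℝ)) ^ (l a)
      ≤ ((univ.filter fun f : Fin n → Z => cnt f = k).card : ℝ) * ∏ a, ((k a : ℝ)) ^ (k a) := by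
    exact_mod_cast hnat
  gcongr

end SSC
end C

section D
open Finset
namespace SSC
variable {Z : Type*} [Fintype Z]

lemma typeclass_sum {n : ℕ} (Q : Z → ℝ) (k : Z → ℕ) :
    ∑ f : Fin n → Z, (if cnt f = k then ∏ i, Q (f i) else 0)
      = ((univ.filter fun f : Fin n → Z => cnt f = k).card : ℝ) * ∏ a, Q a ^ k a := by
  classical
  rw [← Finset.sum_filter]
  rw [Finset.sum_congr rfl (fun f hf => ?_), Finset.sum_const, nsmul_eq_mul]
  rw [prod_pow_cnt Q f, (Finset.mem_filter.mp hf).2]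

lemma card_types_le (n : ℕ) [Nonempty Z] :
    ((univ : Finset (Fin n → Z)).image cnt).card ≤ (n+1) ^ (Fintype.card Z - 1) := by
  classical
  obtain ⟨a₀⟩ := ‹Nonempty Z›
  have hbd : ∀ l ∈ (univ : Finset (Fin n → Z)).image cnt, ∀ a, l a ≤ n := by
    intro l hl a
    obtain ⟨f, _, rfl⟩ := Finset.mem_image.mp hl
    calc cnt f a ≤ ∑ b, cnt f b := Finset.single_le_sum (fun b _ => Nat.zero_le _) (mem_univ a)
      _ = n := sum_cnt f
  have hinj : Set.InjOn
      (fun l : Z → ℕ => fun b : {a : Z // a ≠ a₀} =>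
        (⟨l b.1 % (n+1), Nat.mod_lt _ n.succ_pos⟩ : Fin (n+1)))
      ((univ : Finset (Fin n → Z)).image cnt) := by
    intro l₁ h₁' l₂ h₂' h
    have h₁ : l₁ ∈ (univ : Finset (Fin n → Z)).image cnt := Finset.mem_coe.mp h₁'
    have h₂ : l₂ ∈ (univ : Finset (Fin n → Z)).image cnt := Finset.mem_coe.mp h₂'
    have hsum₁ : ∑ a, l₁ a = n := by
      obtain ⟨f, _, rfl⟩ := Finset.mem_image.mp h₁; exact sum_cnt f
    have hsum₂ : ∑ a, l₂ a = n := by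
      obtain ⟨f, _, rfl⟩ := Finset.mem_image.mp h₂; exact sum_cnt f
    have hval : ∀ a : Z, a ≠ a₀ → l₁ a = l₂ a := by
      intro a ha
      have := congrFun h ⟨a, ha⟩
      have hv : l₁ a % (n+1) = l₂ a % (n+1) := congrArg Fin.val this
      have b1 : l₁ a < n + 1 := Nat.lt_succ_of_le (hbd l₁ h₁ a)
      have b2 : l₂ a < n + 1 := Nat.lt_succ_of_le (hbd l₂ h₂ a)
      rwa [Nat.mod_eq_of_lt b1, Nat.mod_eq_of_lt b2] at hv
    funext a
    by_cases ha : a = a₀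
    · subst ha
      have e₁ := Finset.add_sum_erase univ l₁ (mem_univ a)
      have e₂ := Finset.add_sum_erase univ l₂ (mem_univ a)
      have herase : ∑ b ∈ univ.erase a, l₁ b = ∑ b ∈ univ.erase a, l₂ b :=
        Finset.sum_congr rfl fun b hb => hval b (Finset.ne_of_mem_erase hb)
      rw [hsum₁] at e₁; rw [hsum₂] at e₂
      omega
    · exact hval a ha
  have hle := Finset.card_le_card_of_injOn _
    (fun l _ => mem_univ (fun b : {a : Z // a ≠ a₀} =>
      (⟨l b.1 % (n+1), Nat.mod_lt _ n.succ_pos⟩ : Fin (n+1)))) hinj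
  calc ((univ : Finset (Fin n → Z)).image cnt).card
      ≤ (univ : Finset ({a : Z // a ≠ a₀} → Fin (n+1))).card := hle
    _ = (n+1) ^ (Fintype.card Z - 1) := by
        rw [Finset.card_univ, Fintype.card_fun, Fintype.card_fin]
        congr 1
        rw [Fintype.card_subtype_compl, Fintype.card_subtype_eq]

lemma one_le_bound {n : ℕ} (hn : 0 < n) [Nonempty Z] (k : Z → ℕ) (hk : ∑ a, k a = n) :
    1 ≤ ((n:ℝ)+1) ^ (Fintype.card Z - 1) *
      (((univ.filter fun f : Fin n → Z => cnt f = k).card : ℝ) * ∏ a, ((k a : ℝ)/n) ^ (k a)) := by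
  classical
  set p : Z → ℝ := fun a => (k a : ℝ)/n with hp
  set M : ℝ := ((univ.filter fun f : Fin n → Z => cnt f = k).card : ℝ) * ∏ a, p a ^ (k a) with hM
  have hMnn : 0 ≤ M := by
    apply mul_nonneg (Nat.cast_nonneg _)
    exact Finset.prod_nonneg fun a _ => pow_nonneg (by positivity) _
  have hsum : ∑ a, p a = 1 := by
    rw [hp, ← Finset.sum_div]
    rw [show ∑ a, ((k a : ℝ)) = (n:ℝ) by exact_mod_cast congrArg (Nat.cast : ℕ → ℝ) hk]
    exact div_self (by positivity)
  have h1 : (1:ℝ) = ∑ f : Fin n → Z, ∏ i, p (f i) := by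
    have := Finset.prod_univ_sum (fun _ : Fin n => (univ : Finset Z)) (fun _ a => p a)
    rw [Fintype.piFinset_univ] at this
    calc (1:ℝ) = (∑ a, p a) ^ n := by rw [hsum]; simp
      _ = ∏ _i : Fin n, (∑ a, p a) := by rw [Finset.prod_const, Finset.card_univ, Fintype.card_fin]
      _ = ∑ f : Fin n → Z, ∏ i, p (f i) := this
  have h2 : ∑ f : Fin n → Z, ∏ i, p (f i)
      = ∑ l ∈ (univ : Finset (Fin n → Z)).image cnt,
          ∑ f ∈ univ.filter fun f : Fin n → Z => cnt f = l, ∏ i, p (f i) :=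
    (Finset.sum_fiberwise_of_maps_to (fun f _ => Finset.mem_image_of_mem cnt (mem_univ f)) _).symm
  have h3 : ∀ l ∈ (univ : Finset (Fin n → Z)).image cnt,
      (∑ f ∈ univ.filter fun f : Fin n → Z => cnt f = l, ∏ i, p (f i)) ≤ M := by
    intro l hl
    have hsl : ∑ a, l a = n := by
      obtain ⟨f, _, rfl⟩ := Finset.mem_image.mp hl; exact sum_cnt f
    have : (∑ f ∈ univ.filter fun f : Fin n → Z => cnt f = l, ∏ i, p (f i))
        = ((univ.filter fun f : Fin n → Z => cnt f = l).card : ℝ) * ∏ a, p a ^ (l a) := by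
      rw [Finset.sum_congr rfl (fun f hf => ?_), Finset.sum_const, nsmul_eq_mul]
      rw [prod_pow_cnt p f, (Finset.mem_filter.mp hf).2]
    rw [this, hM]
    exact compare_real hn k l hk hsl
  have h4 : (1:ℝ) ≤ (((univ : Finset (Fin n → Z)).image cnt).card : ℝ) * M := by
    rw [h1, h2]
    calc (∑ l ∈ (univ : Finset (Fin n → Z)).image cnt,
          ∑ f ∈ univ.filter fun f : Fin n → Z => cnt f = l, ∏ i, p (f i))
        ≤ (((univ : Finset (Fin n → Z)).image cnt).card) • M := Finset.sum_le_card_nsmul _ _ M h3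
      _ = _ := by rw [nsmul_eq_mul]
  calc (1:ℝ) ≤ (((univ : Finset (Fin n → Z)).image cnt).card : ℝ) * M := h4
    _ ≤ ((n:ℝ)+1) ^ (Fintype.card Z - 1) * M := by
        apply mul_le_mul_of_nonneg_right _ hMnn
        calc (((univ : Finset (Fin n → Z)).image cnt).card : ℝ)
            ≤ (((n+1) ^ (Fintype.card Z - 1) : ℕ) : ℝ) := by exact_mod_cast card_types_le n
          _ = ((n:ℝ)+1) ^ (Fintype.card Z - 1) := by push_cast; ring

lemma prod_pow_eq_exp {n : ℕ} (hn : 0 < n) (Q : Z → ℝ) (hQ : ∀ a, 0 < Q a) (k : Z → ℕ) :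
    ∏ a, Q a ^ k a
      = Real.exp (-(∑ a, ((k a : ℝ)/n) * Real.log (((k a : ℝ)/n) / Q a)) * n)
        * ∏ a, ((k a : ℝ)/n) ^ k a := by
  have hterm : ∀ a : Z, Q a ^ k a
      = Real.exp (-(((k a : ℝ)/n) * Real.log (((k a : ℝ)/n) / Q a)) * n) * ((k a : ℝ)/n) ^ k a := by
    intro a
    rcases Nat.eq_zero_or_pos (k a) with h0 | hpos
    · rw [h0]; simp
    · set pa : ℝ := (k a : ℝ)/n with hpa
      have hpa0 : 0 < pa := by positivity
      have hlog : Real.log (pa / Q a) = Real.log pa - Real.log (Q a) :=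
        Real.log_div (ne_of_gt hpa0) (ne_of_gt (hQ a))
      have hkn : pa * (n:ℝ) = (k a : ℝ) := by
        rw [hpa]; field_simp
      have hexp : -(pa * Real.log (pa / Q a)) * n = (k a : ℝ) * (Real.log (Q a) - Real.log pa) := by
        rw [hlog, ← hkn]; ring
      rw [hexp]
      rw [Real.exp_nat_mul, Real.exp_sub, Real.exp_log (hQ a), Real.exp_log hpa0]
      rw [div_pow, div_mul_cancel₀ _ (pow_ne_zero _ (ne_of_gt hpa0))]
  rw [Finset.prod_congr rfl fun a _ => hterm a, Finset.prod_mul_distrib, ← Real.exp_sum]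
  congr 1
  rw [← Finset.sum_mul, ← Finset.sum_neg_distrib]

end SSC
end D

section Main
open Finset
namespace SSC

variable {X Y : Type*} [Fintype X] [Fintype Y]

def pairEquiv {n : ℕ} : ((Fin n → X) × (Fin n → Y)) ≃ (Fin n → X × Y) where
  toFun := fun z' i => (z'.1 i, z'.2 i)
  invFun := fun f => (fun i => (f i).1, fun i => (f i).2)
  left_inv := fun z' => rfl
  right_inv := fun f => funext fun i => rfl

lemma empJoint_eq_cnt {n : ℕ} (x : Fin n → X) (y : Fin n → Y) :
    empJoint x y = fun a => ((cnt (fun i => (x i, y i)) a : ℝ)) / n := by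
  classical
  funext a
  have h : (univ.filter fun i : Fin n => (x i, y i) = a)
      = (univ.filter fun i : Fin n => x i = a.1 ∧ y i = a.2) :=
    Finset.filter_congr (fun i _ => by simp [Prod.ext_iff])
  simp only [empJoint, cnt]
  congr 2
  rw [← h]

lemma margX_empJoint {n : ℕ} (x : Fin n → X) (y : Fin n → Y) :
    margX (empJoint x y) = empDist x := by
  classical
  funext a
  have h := Finset.card_eq_sum_card_fiberwise
    (s := univ.filter fun i : Fin n => x i = a) (t := univ) (f := fun i => y i)
    (fun i _ => mem_univ _)
  simp only [Finset.filter_filter] at h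
  simp only [margX, empJoint, empDist, ← Finset.sum_div]
  congr 1
  rw [h, Nat.cast_sum]

lemma margY_empJoint {n : ℕ} (x : Fin n → X) (y : Fin n → Y) :
    margY (empJoint x y) = empDist y := by
  classical
  funext b
  have h := Finset.card_eq_sum_card_fiberwise
    (s := univ.filter fun i : Fin n => y i = b) (t := univ) (f := fun i => x i)
    (fun i _ => mem_univ _)
  simp only [Finset.filter_filter] at h
  have h2 : ∀ x0 : X, (univ.filter fun i : Fin n => y i = b ∧ x i = x0)
      = (univ.filter fun i : Fin n => x i = x0 ∧ y i = b) :=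
    fun x0 => Finset.filter_congr (fun i _ => by constructor <;> exact fun hh => ⟨hh.2, hh.1⟩)
  simp only [h2] at h
  simp only [margY, empJoint, empDist, ← Finset.sum_div]
  congr 1
  rw [h, Nat.cast_sum]

end SSC
end Main

/-- converse bound for symmetric (type-based) testing schemes. -/
theorem symmetric_scheme_converse
    [Nonempty X] [Nonempty Y]
    (P Q : X × Y → ℝ) (hP : IsPos P) (hQ : IsPos Q)
    (n : ℕ) (hn : 1 ≤ n) (r : ℝ) (hr : 0 < r)
    (A : Set ((Fin n → X) × (Fin n → Y)))
    (hsym : ∀ x x' : Fin n → X, ∀ y y' : Fin n → Y,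
      empDist x = empDist x' → empDist y = empDist y' → ((x, y) ∈ A ↔ (x', y') ∈ A))
    (hβ : prodProb Q n A ≤ Real.exp (-r * (n : ℝ))) :
    prodProb P n Aᶜ
      ≥ prodProb P n
          {z : (Fin n → X) × (Fin n → Y) |
            En n (empJoint z.1 z.2) Q
              < r - ((Fintype.card X : ℝ) * (Fintype.card Y : ℝ) - 1)
                  * Real.log ((n : ℝ) + 1) / (n : ℝ)} := by
  classical
  have hn0 : (0:ℝ) < n := by exact_mod_cast hn
  set c : ℝ := r - ((Fintype.card X : ℝ) * (Fintype.card Y : ℝ) - 1)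
      * Real.log ((n : ℝ) + 1) / (n : ℝ) with hc
  set mm : ℕ := Fintype.card (X × Y) - 1 with hmm
  have hm1 : 1 ≤ Fintype.card (X × Y) := Fintype.card_pos
  have hmcast : ((mm : ℕ) : ℝ)
      = (Fintype.card X : ℝ) * (Fintype.card Y : ℝ) - 1 := by
    rw [hmm, Nat.cast_sub hm1, Fintype.card_prod]
    push_cast; ring
  -- main claim: any element of A has large En
  have hA : ∀ z' : (Fin n → X) × (Fin n → Y), z' ∈ A → c ≤ En n (empJoint z'.1 z'.2) Q := by
    rintro ⟨x, y⟩ hz'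
    unfold En
    apply le_csInf
    · refine ⟨relEnt (empJoint x y) Q, empJoint x y, ⟨⟨?_, ?_⟩, ?_⟩, rfl, rfl, rfl⟩
      · intro z; exact div_nonneg (Nat.cast_nonneg _) (le_of_lt hn0)
      · rw [SSC.empJoint_eq_cnt x y, ← Finset.sum_div,
          show (∑ a : X × Y, ((SSC.cnt (fun i => (x i, y i)) a : ℝ))) = (n:ℝ) from by
            exact_mod_cast SSC.sum_cnt (fun i => (x i, y i))]
        exact div_self (ne_of_gt hn0)
      · intro z; exact ⟨_, rfl⟩
    · rintro d ⟨Pt, hPt, hmx, hmy, rfl⟩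
      choose k hk using hPt.2
      have hPtk : Pt = fun a => (k a : ℝ)/n := funext hk
      have hsumk : ∑ a : X × Y, k a = n := by
        have h1 : ∑ a : X × Y, Pt a = 1 := hPt.1.2
        rw [hPtk, ← Finset.sum_div, div_eq_one_iff_eq (ne_of_gt hn0)] at h1
        exact_mod_cast h1
      have hmem : ∀ z'' : (Fin n → X) × (Fin n → Y),
          SSC.cnt (fun i => (z''.1 i, z''.2 i)) = k → z'' ∈ A := by
        rintro ⟨x', y'⟩ hcnt
        have hEJ : empJoint x' y' = Pt := by
          rw [SSC.empJoint_eq_cnt x' y', hPtk]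
          simp only [hcnt]
        have h1 : empDist x' = empDist x := by
          rw [← SSC.margX_empJoint x' y', ← SSC.margX_empJoint x y, hEJ]
          exact hmx
        have h2 : empDist y' = empDist y := by
          rw [← SSC.margY_empJoint x' y', ← SSC.margY_empJoint x y, hEJ]
          exact hmy
        exact (hsym x x' y y' h1.symm h2.symm).mp hz'
      have hQA : ((Finset.univ.filter fun f : Fin n → X × Y => SSC.cnt f = k).card : ℝ)
            * ∏ a, Q a ^ k a ≤ prodProb Q n A := by
        calc ((Finset.univ.filter fun f : Fin n → X × Y => SSC.cnt f = k).card : ℝ)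
              * ∏ a, Q a ^ k a
            = ∑ f : Fin n → X × Y, (if SSC.cnt f = k then ∏ i, Q (f i) else 0) :=
              (SSC.typeclass_sum Q k).symm
          _ = ∑ z'' : (Fin n → X) × (Fin n → Y),
                (if SSC.cnt (SSC.pairEquiv z'') = k then ∏ i, Q (SSC.pairEquiv z'' i) else 0) :=
              (Equiv.sum_comp SSC.pairEquiv
                (fun f : Fin n → X × Y => if SSC.cnt f = k then ∏ i, Q (f i) else 0)).symm
          _ ≤ prodProb Q n A := by
              unfold prodProb
              apply Finset.sum_le_sum
              intro z'' _
              by_cases hcnt : SSC.cnt (SSC.pairEquiv z'') = k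
              · rw [if_pos hcnt, if_pos (show z'' ∈ A from hmem z'' hcnt)]
                exact le_of_eq rfl
              · rw [if_neg hcnt]
                split_ifs with h'
                · exact Finset.prod_nonneg fun i _ => le_of_lt (hQ.1 _)
                · exact le_refl _
      have hlow := SSC.one_le_bound (Z := X × Y) (n := n) (by omega) k hsumk
      have hrel : ∏ a, Q a ^ k a
          = Real.exp (-(relEnt Pt Q) * n) * ∏ a, ((k a : ℝ)/n) ^ k a := by
        rw [SSC.prod_pow_eq_exp (by omega : 0 < n) Q hQ.1 k]
        congr 3
        rw [hPtk]
        simp [relEnt]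
      have hMpos : (0:ℝ) < ((n:ℝ)+1) ^ mm := by positivity
      have hM : (((n:ℝ)+1) ^ mm)⁻¹
          ≤ ((Finset.univ.filter fun f : Fin n → X × Y => SSC.cnt f = k).card : ℝ)
            * ∏ a, ((k a : ℝ)/n) ^ k a := by
        rw [inv_eq_one_div, div_le_iff₀ hMpos]
        exact le_trans hlow (le_of_eq (mul_comm _ _))
      have hchain : Real.exp (-(relEnt Pt Q) * n) * (((n:ℝ)+1) ^ mm)⁻¹
          ≤ Real.exp (-r * n) := by
        calc Real.exp (-(relEnt Pt Q) * n) * (((n:ℝ)+1) ^ mm)⁻¹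
            ≤ Real.exp (-(relEnt Pt Q) * n) *
              (((Finset.univ.filter fun f : Fin n → X × Y => SSC.cnt f = k).card : ℝ)
                * ∏ a, ((k a : ℝ)/n) ^ k a) :=
              mul_le_mul_of_nonneg_left hM (le_of_lt (Real.exp_pos _))
          _ = ((Finset.univ.filter fun f : Fin n → X × Y => SSC.cnt f = k).card : ℝ)
                * ∏ a, Q a ^ k a := by rw [hrel]; ring
          _ ≤ prodProb Q n A := hQA
          _ ≤ Real.exp (-r * n) := hβ
      have hlog := Real.log_le_log (by positivity) hchain
      rw [Real.log_mul (ne_of_gt (Real.exp_pos _)) (ne_of_gt (inv_pos.mpr hMpos)),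
        Real.log_exp, Real.log_exp, Real.log_inv, Real.log_pow] at hlog
      -- hlog : -(relEnt Pt Q) * n + -(mm * Real.log (n+1)) ≤ -r * n
      rw [hc, ← hmcast, sub_le_iff_le_add, ← sub_le_iff_le_add', le_div_iff₀ hn0]
      linarith [hlog]
  -- conclude
  rw [ge_iff_le]
  unfold prodProb
  apply Finset.sum_le_sum
  intro z' _
  by_cases hz : z' ∈ A
  · have hge := hA z' hz
    have hnotB : ¬ (En n (empJoint z'.1 z'.2) Q < c) := not_lt.mpr hge
    rw [if_neg (show z' ∉ {z : (Fin n → X) × (Fin n → Y) |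
        En n (empJoint z.1 z.2) Q < c} from hnotB),
      if_neg (show z' ∉ Aᶜ from fun hcc => hcc hz)]
  · rw [if_pos (show z' ∈ Aᶜ from hz)]
    split_ifs with h'
    · exact le_refl _
    · exact Finset.prod_nonneg fun i _ => le_of_lt (hP.1 _)
end
end
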